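/- arXiv:1505.06635 — 2 statements merged into one kernel-verified Lean document; each statement's English description precedes it below -/
import Mathlib

section
/- For every natural number n ≥ 1 and every complex number z with z ≠ 0 and z² ≠ 1: F_n(z) = (zⁿ/(z²−1)) · ( ((2n+1)z² − 1) P_n(J(z)) − 2nz P_{n−1}(J(z)) ) and G_n(z) = (zⁿ/(z²−1)) · ( (z² − (2n+1)) P_n(J(z)) + 2nz P_{n−1}(J(z)) ). -/
open Polynomial Finset

/-- The degree-`n` Legendre polynomial (over `ℂ`), defined by the Rodrigues formula
`P_n(x) = (1/(2^n n!)) dⁿ/dxⁿ (x²−1)ⁿ`. -/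
noncomputable def legendre (n : ℕ) : Polynomial ℂ :=
  Polynomial.C (1 / (2 ^ n * n.factorial : ℂ)) *
    Polynomial.derivative^[n] ((Polynomial.X ^ 2 - 1) ^ n)

/-- `P_n(z)`, the value of the degree-`n` Legendre polynomial at `z ∈ ℂ`. -/
noncomputable def P (n : ℕ) (z : ℂ) : ℂ := (legendre n).eval z

/-- `P_n'(z)`, the value of the derivative of the degree-`n` Legendre polynomial at `z ∈ ℂ`. -/
noncomputable def P' (n : ℕ) (z : ℂ) : ℂ := (Polynomial.derivative (legendre n)).eval z

/-- The Joukowski map `J(z) = (z + 1/z)/2`. -/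
noncomputable def J (z : ℂ) : ℂ := (z + 1 / z) / 2

/-- `F_n(z) = (n+1) zⁿ P_n(J(z)) + (z^{n−1}(z²−1)/2) P_n'(J(z))`. -/
noncomputable def F (n : ℕ) (z : ℂ) : ℂ :=
  (n + 1) * z ^ (n : ℤ) * P n (J z) + z ^ ((n : ℤ) - 1) * (z ^ 2 - 1) / 2 * P' n (J z)

/-- `G_n(z) = z^{2n} F_n(1/z)`. -/
noncomputable def G (n : ℕ) (z : ℂ) : ℂ := z ^ (2 * n) * F n (1 / z)

private lemma iterX : ∀ (m : ℕ) (p : Polynomial ℂ),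
    derivative^[m] (X * p) = X * derivative^[m] p + (m : Polynomial ℂ) * derivative^[m-1] p
  | 0, p => by simp
  | (m+1), p => by
    rw [Function.iterate_succ_apply, derivative_mul, derivative_X, one_mul,
      iterate_map_add, iterX m (derivative p)]
    cases m with
    | zero => simp; ring
    | succ k =>
      rw [show k+1-1 = k from rfl, ← Function.iterate_succ_apply, ← Function.iterate_succ_apply,
        show k+1+1-1 = k+1 from rfl]
      push_cast
      ring

private lemma Gstar (m : ℕ) : ∀ (k : ℕ),
    (X^2 - 1) * derivative^[k+1] (((X:Polynomial ℂ)^2-1)^m)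
      + ((2*k : ℕ) : Polynomial ℂ) * X * derivative^[k] (((X:Polynomial ℂ)^2-1)^m)
      + ((k*k : ℕ) : Polynomial ℂ) * derivative^[k-1] (((X:Polynomial ℂ)^2-1)^m)
    = ((2*m : ℕ) : Polynomial ℂ) * X * derivative^[k] (((X:Polynomial ℂ)^2-1)^m)
      + ((k*(2*m+1) : ℕ) : Polynomial ℂ) * derivative^[k-1] (((X:Polynomial ℂ)^2-1)^m)
  | 0 => by
    cases m with
    | zero => simp
    | succ s =>
      rw [Function.iterate_one, derivative_pow_succ]
      simp only [derivative_sub, derivative_one, derivative_X_pow, sub_zero,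
        Function.iterate_zero, id_eq, map_add, map_one, C_eq_natCast, Nat.reduceSub, pow_one]
      rw [pow_succ]
      push_cast
      ring
  | (k+1) => by
    have h := congrArg derivative (Gstar m k)
    simp only [derivative_mul, derivative_sub, derivative_add, derivative_one, derivative_X,
      derivative_natCast, derivative_X_pow, Nat.succ_eq_add_one, C_eq_natCast, Nat.reduceSub,
      pow_one, zero_mul, mul_zero, zero_add, add_zero, sub_zero, mul_one, zero_sub,
      ← Function.iterate_succ_apply'] at h
    cases k with
    | zero =>
      simp only [Nat.zero_sub, Nat.mul_zero, Nat.zero_mul, Nat.cast_zero, zero_mul, zero_add,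
        add_zero, Function.iterate_zero, id_eq, Nat.add_sub_cancel, Nat.reduceSub,
        Nat.reduceMul, Nat.reduceAdd] at h ⊢
      push_cast at h ⊢
      linear_combination h
    | succ j =>
      simp only [Nat.add_sub_cancel, zero_mul, mul_zero, zero_add, add_zero] at h ⊢
      push_cast at h ⊢
      linear_combination h

private lemma du (n : ℕ) : derivative (((X:Polynomial ℂ)^2-1)^(n+1)) =
    ((2*(n+1) : ℕ) : Polynomial ℂ) * (X * ((X:Polynomial ℂ)^2-1)^n) := by
  rw [derivative_pow_succ]
  simp only [derivative_sub, derivative_one, derivative_X_pow, sub_zero, Nat.reduceSub, pow_one,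
    map_add, map_one, C_eq_natCast]
  push_cast
  ring

private lemma hc (n : ℕ) : (C (1 / (2 ^ (n+1) * (n+1).factorial : ℂ)) : Polynomial ℂ) *
    ((2*(n+1) : ℕ) : Polynomial ℂ) = C (1 / (2 ^ n * n.factorial : ℂ)) := by
  rw [← C_eq_natCast, ← C_mul]
  congr 1
  have h1 : ((n.factorial : ℂ)) ≠ 0 := Nat.cast_ne_zero.2 n.factorial_ne_zero
  have h2 : ((n:ℂ) + 1) ≠ 0 := Nat.cast_add_one_ne_zero n
  field_simp [Nat.factorial_succ, pow_succ]
  push_cast [Nat.factorial_succ]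
  ring

private lemma lemA (n : ℕ) : derivative (legendre (n+1)) =
    X * derivative (legendre n) + ((n+1 : ℕ) : Polynomial ℂ) * legendre n := by
  unfold legendre
  rw [derivative_C_mul]
  simp only [← Function.iterate_succ_apply']
  rw [Function.iterate_succ_apply, du, iterate_derivative_natCast_mul, iterX (n+1),
    show n+1-1 = n from rfl, derivative_C_mul]
  simp only [← Function.iterate_succ_apply']
  have h := hc n
  push_cast at h ⊢
  linear_combination (X * derivative^[n+1] (((X:Polynomial ℂ)^2-1)^n)
    + ((n:Polynomial ℂ)+1) * derivative^[n] (((X:Polynomial ℂ)^2-1)^n)) * h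

private lemma lemD (n : ℕ) : ((n+1:ℕ) : Polynomial ℂ) * legendre (n+1) =
    (X^2-1) * derivative (legendre n) + ((n+1:ℕ) : Polynomial ℂ) * X * legendre n := by
  unfold legendre
  rw [Function.iterate_succ_apply, du, iterate_derivative_natCast_mul, iterX n,
    derivative_C_mul]
  simp only [← Function.iterate_succ_apply']
  have h := hc n
  have hG := Gstar n n
  push_cast at h hG ⊢
  linear_combination (((n:Polynomial ℂ)+1) * (X * derivative^[n] (((X:Polynomial ℂ)^2-1)^n)
      + (n:Polynomial ℂ) * derivative^[n-1] (((X:Polynomial ℂ)^2-1)^n))) * h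
    - C (1 / (2 ^ n * n.factorial : ℂ)) * hG

private lemma key (n : ℕ) : (X^2 - 1) * derivative (legendre (n+1)) =
    ((n+1:ℕ) : Polynomial ℂ) * (X * legendre (n+1) - legendre n) := by
  rw [lemA]
  linear_combination (-(X : Polynomial ℂ)) * lemD n

private lemma keyEval (n : ℕ) (x : ℂ) :
    (x^2 - 1) * P' (n+1) x = ((n:ℂ)+1) * (x * P (n+1) x - P n x) := by
  have h := congrArg (eval x) (key n)
  simp only [eval_mul, eval_sub, eval_add, eval_pow, eval_X, eval_one, eval_natCast,
    Nat.cast_add, Nat.cast_one] at h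
  simpa [P, P'] using h

private lemma hP' (m : ℕ) (z : ℂ) (hz : z ≠ 0) (hz2 : z ^ 2 ≠ 1) :
    P' (m+1) (J z) =
      ((m:ℂ)+1) * (2*z*(z^2+1) * P (m+1) (J z) - 4*z^2 * P m (J z)) / (z^2-1)^2 := by
  have hz2' : z ^ 2 - 1 ≠ 0 := sub_ne_zero.mpr hz2
  have h1 : 4*z^2*((J z)^2 - 1) = (z^2-1)^2 := by
    simp only [J]; field_simp; ring
  have h2 : 2*z*(J z) = z^2+1 := by
    simp only [J]; field_simp
  rw [eq_div_iff (pow_ne_zero 2 hz2')]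
  linear_combination (-(P' (m+1) (J z))) * h1 + (4*z^2) * keyEval m (J z)
    + ((m:ℂ)+1)*2*z*(P (m+1) (J z)) * h2

private lemma Fform (m : ℕ) (z : ℂ) (hz : z ≠ 0) (hz2 : z ^ 2 ≠ 1) :
    F (m+1) z = (z ^ ((m+1 : ℕ) : ℤ) / (z ^ 2 - 1)) *
        (((2 * (m+1 : ℕ) + 1) * z ^ 2 - 1) * P (m+1) (J z) - 2 * (m+1 : ℕ) * z * P m (J z)) := by
  have hz2' : z ^ 2 - 1 ≠ 0 := sub_ne_zero.mpr hz2
  unfold F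
  rw [show ((m+1:ℕ):ℤ) - 1 = ((m:ℕ):ℤ) by push_cast; ring, zpow_natCast, zpow_natCast,
    hP' m z hz hz2]
  field_simp
  push_cast
  ring

private lemma Gform (m : ℕ) (z : ℂ) (hz : z ≠ 0) (hz2 : z ^ 2 ≠ 1) :
    G (m+1) z = (z ^ ((m+1 : ℕ) : ℤ) / (z ^ 2 - 1)) *
        ((z ^ 2 - (2 * (m+1 : ℕ) + 1)) * P (m+1) (J z) + 2 * (m+1 : ℕ) * z * P m (J z)) := by
  have hz2' : z ^ 2 - 1 ≠ 0 := sub_ne_zero.mpr hz2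
  have hzi : (1/z : ℂ) ≠ 0 := one_div_ne_zero hz
  have hzi2 : (1/z) ^ 2 ≠ 1 := by
    intro h
    apply hz2
    field_simp at h
    exact h.symm
  have hJinv : J (1/z) = J z := by
    simp only [J, one_div_one_div]
    ring_nf
  have e : ((1:ℂ)/z) ^ ((m+1:ℕ):ℤ) / ((1/z) ^ 2 - 1) = -(z^2 * (z^(m+1))⁻¹)/(z^2-1) := by
    rw [zpow_natCast, div_eq_div_iff (sub_ne_zero.mpr hzi2) hz2']
    field_simp
    rw [mul_right_comm, ← mul_pow, one_div_mul_cancel hz, one_pow]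
    ring
  unfold G
  rw [Fform m (1/z) hzi hzi2, hJinv, div_mul_eq_mul_div, div_mul_eq_mul_div, ← div_mul_eq_mul_div,
    e, zpow_natCast]
  field_simp
  ring

/-- For `n ≥ 1` and `z ≠ 0` with `z² ≠ 1`:
`F_n(z) = (zⁿ/(z²−1)) (((2n+1)z² − 1) P_n(J(z)) − 2nz P_{n−1}(J(z)))` and
`G_n(z) = (zⁿ/(z²−1)) ((z² − (2n+1)) P_n(J(z)) + 2nz P_{n−1}(J(z)))`. -/
theorem F_and_G_formulas (n : ℕ) (hn : 1 ≤ n) (z : ℂ) (hz : z ≠ 0) (hz2 : z ^ 2 ≠ 1) :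
    F n z = (z ^ (n : ℤ) / (z ^ 2 - 1)) *
        (((2 * n + 1) * z ^ 2 - 1) * P n (J z) - 2 * n * z * P (n - 1) (J z)) ∧
    G n z = (z ^ (n : ℤ) / (z ^ 2 - 1)) *
        ((z ^ 2 - (2 * n + 1)) * P n (J z) + 2 * n * z * P (n - 1) (J z)) := by
  obtain ⟨m, rfl⟩ : ∃ m, n = m + 1 := ⟨n - 1, (Nat.succ_pred_eq_of_pos hn).symm⟩
  simp only [Nat.add_sub_cancel]
  exact ⟨Fform m z hz hz2, Gform m z hz hz2⟩
end

section
/- For every natural number n ≥ 1, every natural number k ≥ 0, and every nonzero complex number z: 2(n+1) z^{2n−1} P_{n+k}(J(z)) = A_k^{(n)}(z) G_n(z) + B_k^{(n)}(z) F_n(z). -/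
open Polynomial Finset

/-- The Laurent polynomials `A_k^{(n)}`: `A_0 = z^{n−1}`, `A_1 = z^{n−2}`, and for `k ≥ 1`,
`(n+k+1) A_{k+1} = (2(n+k)+1) J(z) A_k − (n+k) A_{k−1}`. -/
noncomputable def A (n : ℕ) : ℕ → ℂ → ℂ
  | 0 => fun z => z ^ ((n : ℤ) - 1)
  | 1 => fun z => z ^ ((n : ℤ) - 2)
  | (k + 2) => fun z =>
      ((2 * ((n : ℂ) + (k + 1)) + 1) * J z * A n (k + 1) z - ((n : ℂ) + (k + 1)) * A n k z) /
        ((n : ℂ) + (k + 1) + 1)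

/-- The Laurent polynomials `B_k^{(n)}`: `B_0 = z^{n−1}`, `B_1 = zⁿ`, and for `k ≥ 1`,
`(n+k+1) B_{k+1} = (2(n+k)+1) J(z) B_k − (n+k) B_{k−1}`. -/
noncomputable def B (n : ℕ) : ℕ → ℂ → ℂ
  | 0 => fun z => z ^ ((n : ℤ) - 1)
  | 1 => fun z => z ^ (n : ℤ)
  | (k + 2) => fun z =>
      ((2 * ((n : ℂ) + (k + 1)) + 1) * J z * B n (k + 1) z - ((n : ℂ) + (k + 1)) * B n k z) /
        ((n : ℂ) + (k + 1) + 1)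

/-! ### Auxiliary lemmas on iterated derivatives -/

lemma itD_add (k : ℕ) (f g : ℂ[X]) :
    derivative^[k] (f + g) = derivative^[k] f + derivative^[k] g := by
  induction k generalizing f g with
  | zero => rfl
  | succ k ih => simp only [Function.iterate_succ_apply, derivative_add, ih]

lemma itD_X (m : ℕ) (f : ℂ[X]) :
    derivative^[m+1] (X * f) =
      X * derivative^[m+1] f + ((m:ℂ[X])+1) * derivative^[m] f := by
  induction m generalizing f with
  | zero => simp [derivative_mul]; ring
  | succ m ih =>
      have e0 : derivative^[m+2] (X * f) = derivative^[m+1] (derivative (X * f)) :=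
        Function.iterate_succ_apply derivative (m+1) (X*f)
      have e1 : derivative^[m+1] (derivative f) = derivative^[m+2] f :=
        (Function.iterate_succ_apply derivative (m+1) f).symm
      have e2 : derivative^[m] (derivative f) = derivative^[m+1] f :=
        (Function.iterate_succ_apply derivative m f).symm
      rw [e0, derivative_mul, derivative_X, one_mul, itD_add, ih, e1, e2]
      push_cast
      ring

lemma itD_neg (k : ℕ) (f : ℂ[X]) : derivative^[k] (-f) = - derivative^[k] f := by
  simpa using iterate_derivative_C_mul (-1 : ℂ) f k

lemma itD_q (m : ℕ) (f : ℂ[X]) :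
    derivative^[m+2] ((X^2 - 1) * f) =
      (X^2-1) * derivative^[m+2] f + (2*((m:ℂ[X])+2)) * X * derivative^[m+1] f
        + ((m:ℂ[X])+2)*((m:ℂ[X])+1) * derivative^[m] f := by
  have hrw : (X^2 - 1 : ℂ[X]) * f = X * (X * f) + (- f) := by ring
  rw [hrw, itD_add, itD_X (m+1), itD_X (m+1), itD_neg, itD_X m]
  push_cast
  ring

/-! ### The Rodrigues numerators -/

noncomputable def Qp (n : ℕ) : ℂ[X] := derivative^[n] ((X ^ 2 - 1) ^ n)

lemma hu (n : ℕ) : derivative (((X:ℂ[X])^2-1)^(n+1)) =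
    ((2*(n+1) : ℕ) : ℂ[X]) * (X * ((X:ℂ[X])^2-1)^n) := by
  rw [derivative_pow]
  simp only [derivative_sub, derivative_one, derivative_X_pow, Nat.add_sub_cancel,
    C_eq_natCast]
  push_cast
  ring

lemma stepI (n : ℕ) :
    derivative (Qp (n+1)) =
      ((2*(n+1) : ℕ) : ℂ[X]) * (X * derivative (Qp n) + ((n:ℂ[X])+1) * Qp n) := by
  have e0 : derivative (Qp (n+1)) = derivative^[n+1] (derivative (((X:ℂ[X])^2-1)^(n+1))) := by
    rw [Qp, ← Function.iterate_succ_apply' derivative (n+1), Function.iterate_succ_apply]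
  have e1 : derivative^[n+1] (((X:ℂ[X])^2-1)^n) = derivative (Qp n) :=
    Function.iterate_succ_apply' derivative n _
  rw [e0, hu, iterate_derivative_natCast_mul, itD_X n, e1, Qp]

lemma step3 (m : ℕ) :
    Qp (m+2) = ((2*(m+2) : ℕ) : ℂ[X]) *
      (X * Qp (m+1) + ((m:ℂ[X])+1) * derivative^[m] (((X:ℂ[X])^2-1)^(m+1))) := by
  have e0 : Qp (m+2) = derivative^[m+1] (derivative (((X:ℂ[X])^2-1)^(m+2))) :=
    Function.iterate_succ_apply derivative (m+1) _
  rw [e0, hu (m+1), iterate_derivative_natCast_mul, itD_X m, Qp]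

lemma step2 (m : ℕ) :
    (X^2-1) * derivative (Qp (m+2)) =
      ((m:ℂ[X])+2)*((m:ℂ[X])+3) * derivative^[m+1] (((X:ℂ[X])^2-1)^(m+2)) := by
  set u : ℂ[X] := ((X:ℂ[X])^2-1)^(m+2) with hu_def
  have e1 : (X^2-1) * derivative u = ((2*(m+2) : ℕ) : ℂ[X]) * (X * u) := by
    rw [hu_def, hu (m+1)]
    push_cast
    ring
  have h := congrArg (derivative^[m+2]) e1
  rw [itD_q m (derivative u)] at h
  rw [iterate_derivative_natCast_mul, itD_X (m+1)] at h
  have c1 : derivative^[m+2] (derivative u) = derivative (Qp (m+2)) := by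
    rw [← Function.iterate_succ_apply derivative (m+2) u,
      Function.iterate_succ_apply' derivative (m+2) u]
    rfl
  have c2 : derivative^[m+1] (derivative u) = Qp (m+2) := by
    rw [← Function.iterate_succ_apply derivative (m+1) u]; rfl
  have c3 : derivative^[m] (derivative u) = derivative^[m+1] u :=
    (Function.iterate_succ_apply derivative m u).symm
  have c4 : derivative^[m+2] u = Qp (m+2) := rfl
  rw [c1, c2, c3, c4] at h
  push_cast at h ⊢
  linear_combination h

lemma IV_Q (m : ℕ) :
    (2:ℂ[X]) * (X^2-1) * derivative (Qp (m+2)) =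
      Qp (m+3) - 2*((m:ℂ[X])+3) * X * Qp (m+2) := by
  have h2 := step2 m
  have h3 := step3 (m+1)
  push_cast at h2 h3 ⊢
  linear_combination 2*h2 - h3

/-! ### Evaluated identities -/

lemma hP (n : ℕ) (w : ℂ) : P n w = 1/((2:ℂ)^n * n.factorial) * eval w (Qp n) := by
  rw [P, legendre, eval_mul, eval_C]; rfl

lemma hP'_s16 (n : ℕ) (w : ℂ) :
    P' n w = 1/((2:ℂ)^n * n.factorial) * eval w (derivative (Qp n)) := by
  rw [P', legendre, derivative_C_mul, eval_mul, eval_C]; rfl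

lemma den_ne (n : ℕ) : ((2:ℂ)^n * n.factorial) ≠ 0 := by
  apply mul_ne_zero (pow_ne_zero _ two_ne_zero)
  exact_mod_cast Nat.factorial_ne_zero n

lemma fac_succ (n : ℕ) : (((n+1).factorial : ℂ)) = ((n:ℂ)+1) * n.factorial := by
  push_cast [Nat.factorial_succ]; ring

lemma hq (n : ℕ) (w : ℂ) : eval w (Qp n) = (2:ℂ)^n * n.factorial * P n w := by
  rw [hP]
  have := den_ne n
  field_simp
  rw [mul_div_cancel_right₀ _ (by exact_mod_cast Nat.factorial_ne_zero n : (n.factorial:ℂ) ≠ 0)]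

lemma hq' (n : ℕ) (w : ℂ) :
    eval w (derivative (Qp n)) = (2:ℂ)^n * n.factorial * P' n w := by
  rw [hP'_s16]
  have := den_ne n
  field_simp
  rw [mul_div_cancel_right₀ _ (by exact_mod_cast Nat.factorial_ne_zero n : (n.factorial:ℂ) ≠ 0)]

lemma eI (n : ℕ) (w : ℂ) : P' (n+1) w = w * P' n w + ((n:ℂ)+1) * P n w := by
  have hb := congrArg (eval w) (stepI n)
  simp only [eval_mul, eval_add, eval_natCast, eval_X, eval_one] at hb
  rw [hq', hq', hq] at hb
  refine mul_left_cancel₀ (den_ne (n+1)) ?_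
  push_cast [Nat.factorial_succ, pow_succ] at hb ⊢
  linear_combination hb

lemma eIV2 (m : ℕ) (w : ℂ) :
    (w^2-1) * P' (m+2) w = ((m:ℂ)+3) * (P (m+3) w - w * P (m+2) w) := by
  have hb := congrArg (eval w) (IV_Q m)
  simp only [eval_mul, eval_add, eval_sub, eval_natCast, eval_X, eval_one, eval_pow,
    eval_ofNat] at hb
  rw [hq', hq, hq] at hb
  refine mul_left_cancel₀ (mul_ne_zero two_ne_zero (den_ne (m+2))) ?_
  push_cast [Nat.factorial_succ, pow_succ] at hb ⊢
  linear_combination hb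

lemma Qp1 : Qp 1 = 2 * X := by
  simp only [Qp, pow_one, Function.iterate_one, derivative_sub, derivative_one,
    derivative_X_pow, C_eq_natCast]
  norm_num

lemma Qp2 : Qp 2 = 12 * X^2 - 4 := by
  have e : ((X:ℂ[X])^2-1)^2 = X^4 - 2 * X^2 + 1 := by ring
  simp only [Qp, e]
  simp only [Function.iterate_succ_apply, Function.iterate_zero_apply, derivative_add,
    derivative_sub, derivative_one, derivative_X_pow, derivative_mul, derivative_ofNat,
    C_eq_natCast]
  norm_num
  ring

lemma eIV1 (w : ℂ) : (w^2-1) * P' 1 w = (2:ℂ) * (P 2 w - w * P 1 w) := by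
  rw [hP'_s16, hP, hP, Qp1, Qp2]
  simp [Nat.factorial]
  ring

lemma eIVm1 (m : ℕ) (w : ℂ) :
    (w^2-1) * P' (m+1) w = ((m:ℂ)+2) * (P (m+2) w - w * P (m+1) w) := by
  cases m with
  | zero => simpa using eIV1 w
  | succ k =>
      have := eIV2 k w
      push_cast at this ⊢
      linear_combination this

lemma eBon (m : ℕ) (w : ℂ) :
    ((m:ℂ)+3) * P (m+3) w = (2*(m:ℂ)+5) * w * P (m+2) w - ((m:ℂ)+2) * P (m+1) w := by
  have h1 := eIVm1 (m+1) w
  have h2 := eI (m+1) w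
  have h3 := eIVm1 m w
  push_cast at h1 h2 h3
  linear_combination -h1 + (w^2-1)*h2 + w*h3

/-! ### Main theorem -/

/-- `2(n+1) z^{2n−1} P_{n+k}(J(z)) = A_k^{(n)}(z) G_n(z) + B_k^{(n)}(z) F_n(z)` for
`n ≥ 1`, `k ≥ 0` and `z ≠ 0`. -/
theorem partial_fraction_upper (n : ℕ) (hn : 1 ≤ n) (k : ℕ) (z : ℂ) (hz : z ≠ 0) :
    2 * ((n : ℂ) + 1) * z ^ (2 * (n : ℤ) - 1) * P (n + k) (J z) =
      A n k z * G n z + B n k z * F n z := by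
  obtain ⟨N, rfl⟩ : ∃ N, n = N + 1 := ⟨n - 1, by omega⟩
  set n := N + 1 with hn_def
  have hzn : z ^ n ≠ 0 := pow_ne_zero _ hz
  have ezn : z ^ ((n:ℤ)) = z ^ n := zpow_natCast z n
  have ezn1 : z ^ ((n:ℤ)-1) = z ^ n / z := by
    rw [zpow_sub₀ hz, zpow_one, ezn]
  have ezn2 : z ^ ((n:ℤ)-2) = z ^ n / z^2 := by
    rw [zpow_sub₀ hz, ezn, show (2:ℤ) = ((2:ℕ):ℤ) from rfl, zpow_natCast]
  have e2n1 : z ^ (2*(n:ℤ)-1) = z^n * z^n / z := by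
    rw [zpow_sub₀ hz, zpow_one, two_mul, zpow_add₀ hz, ezn]
  have hJinv : J (1/z) = J z := by
    rw [J, J, one_div_one_div]
    ring
  have hJ2 : J z = (z^2+1)/(2*z) := by
    rw [J]
    field_simp
  have hF : F n z = ((n:ℂ)+1) * z^n * P n (J z) + (z^n/z) * (z^2-1)/2 * P' n (J z) := by
    rw [F, ezn, ezn1]
  have hG : G n z = ((n:ℂ)+1) * z^n * P n (J z) - (z^n/z) * (z^2-1)/2 * P' n (J z) := by
    rw [G, F, hJinv, one_div, inv_zpow, inv_zpow, ezn, ezn1, inv_pow, two_mul, pow_add]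
    field_simp [hz, hzn]
    ring
  induction k using Nat.twoStepInduction with
  | zero =>
      simp only [A, B, Nat.add_zero]
      rw [hF, hG, e2n1, ezn1]
      field_simp
      ring
  | one =>
      simp only [A, B]
      rw [hF, hG, e2n1, ezn2, ezn]
      have hIV := eIVm1 N (J z)
      rw [show N + 2 = n + 1 from rfl, show N + 1 = n from rfl] at hIV
      rw [hJ2] at hIV ⊢
      push_cast at hIV ⊢
      rw [hn_def] at hIV ⊢
      push_cast at hIV ⊢
      linear_combination (norm := skip) (-(2*z^(N+1)*z^(N+1)/z)) * hIV
      field_simp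
      ring
  | more k ih ih1 =>
      have hc : ((n:ℂ) + ((k:ℂ)+1) + 1) ≠ 0 := by
        have e : ((n:ℂ) + ((k:ℂ)+1) + 1) = ((n+k+2 : ℕ) : ℂ) := by push_cast; ring
        rw [e]
        exact Nat.cast_ne_zero.2 (by omega)
      simp only [A, B]
      rw [div_mul_eq_mul_div, div_mul_eq_mul_div, ← add_div, eq_div_iff hc]
      have hB := eBon (N+k) (J z)
      have i3 : n + (k+2) = N+k+3 := by omega
      have i2 : n + (k+1) = N+k+2 := by omega
      have i1 : n + k = N+k+1 := by omega
      rw [i3]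
      rw [i2] at ih1
      rw [i1] at ih
      rw [hn_def] at ih ih1 ⊢
      push_cast at hB ih ih1 ⊢
      linear_combination ((2*((N:ℂ)+(k:ℂ)+2)+1)*(J z))*ih1 - ((N:ℂ)+(k:ℂ)+2)*ih
        + (2*((N:ℂ)+2)*z^(2*((N:ℤ)+1)-1))*hB
end
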